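/- Unitary operators U_1,...,U_N on H can be unambiguously discriminated with some (possibly entangled) input state iff they are linearly independent; formally: there exists a vector ψ ∈ H ⊗ H such that the vectors (U_k ⊗ 1) ψ are linearly independent if and only if U_1,...,U_N are linearly independent as operators. -/

import Mathlib

open TensorProduct

/-- Unitary operators `U 1, ..., U N` on a finite-dimensional complex Hilbert
space `H` can be unambiguously discriminated with some (possibly entangled) input state iff
they are linearly independent: there exists `ψ ∈ H ⊗ H` such that the vectors
`(U k ⊗ 1) ψ` are linearly independent if and only if the `U k` are linearly independent as
operators. -/
theorem stmt_14 {H : Type*} [NormedAddCommGroup H] [InnerProductSpace ℂ H]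
    [FiniteDimensional ℂ H] (N : ℕ) (U : Fin N → (H →ₗ[ℂ] H))
    (hU : ∀ k, LinearMap.adjoint (U k) ∘ₗ U k = LinearMap.id ∧
      U k ∘ₗ LinearMap.adjoint (U k) = LinearMap.id) :
    (∃ ψ : H ⊗[ℂ] H, LinearIndependent ℂ
      (fun k => TensorProduct.map (U k) (LinearMap.id (R := ℂ) (M := H)) ψ)) ↔
    LinearIndependent ℂ U := by
  constructor
  · rintro ⟨ψ, hψ⟩
    rw [Fintype.linearIndependent_iff] at hψ ⊢
    intro g hg k
    refine hψ g ?_ k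
    have : TensorProduct.map (∑ i, g i • U i) (LinearMap.id (R := ℂ) (M := H)) ψ = 0 := by
      rw [hg]; simp [TensorProduct.map_zero_left]
    rw [← this]
    have heq : TensorProduct.map (∑ i, g i • U i) (LinearMap.id (R := ℂ) (M := H)) =
        ∑ i, g i • TensorProduct.map (U i) (LinearMap.id (R := ℂ) (M := H)) := by
      have hrw : ∀ A : H →ₗ[ℂ] H, TensorProduct.map A (LinearMap.id (R := ℂ) (M := H)) =
          (TensorProduct.mapBilinear (RingHom.id ℂ) H H H H).flip LinearMap.id A := fun A => rfl
      simp_rw [hrw, map_sum, map_smul]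
    rw [heq, LinearMap.sum_apply]
    simp
  · intro hlin
    -- maximally entangled state
    obtain ⟨s, ⟨b⟩⟩ := Module.Basis.exists_basis ℂ H
    haveI : Finite s := (Module.Finite.finite_basis b)
    haveI : Fintype s := Fintype.ofFinite s
    set ψ : H ⊗[ℂ] H := ∑ j, b j ⊗ₜ[ℂ] b j with hψdef
    -- the linear map A ↦ (A ⊗ id) ψ
    let Φ : (H →ₗ[ℂ] H) →ₗ[ℂ] H ⊗[ℂ] H :=
      { toFun := fun A => TensorProduct.map A LinearMap.id ψ
        map_add' := fun A B => by rw [TensorProduct.map_add_left]; rfl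
        map_smul' := fun c A => by rw [TensorProduct.map_smul_left]; rfl }
    have hΦinj : Function.Injective Φ := by
      rw [injective_iff_map_eq_zero]
      intro A hA
      have h0 : ∑ j, (A (b j)) ⊗ₜ[ℂ] (b j) = (0 : H ⊗[ℂ] H) := by
        have : TensorProduct.map A LinearMap.id ψ = ∑ j, (A (b j)) ⊗ₜ[ℂ] (b j) := by
          rw [hψdef, map_sum]; simp
        rw [← this]; exact hA
      apply b.ext
      intro j
      have := congrArg (fun x => (b.tensorProduct b).repr x) h0
      simp only [map_sum, map_zero] at this
      have hcoord : ∀ i : s, (b.repr (A (b j))) i = 0 := by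
        intro i
        have := congrArg (fun f => f (i, j)) this
        simp only [Finsupp.coe_zero, Pi.zero_apply, Finsupp.finset_sum_apply] at this
        rw [← this]
        rw [Finset.sum_eq_single j]
        · simp [Module.Basis.tensorProduct_repr_tmul_apply]
        · intro j' _ hj'
          simp [Module.Basis.tensorProduct_repr_tmul_apply, Finsupp.single_apply, hj']
        · simp
      have : b.repr (A (b j)) = 0 := Finsupp.ext hcoord
      simp only [LinearMap.zero_apply]
      exact (b.repr.map_eq_zero_iff).mp this
    exact ⟨ψ, hlin.map' Φ (LinearMap.ker_eq_bot.mpr hΦinj)⟩
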